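/- Under the Lipschitz condition ‖F'(y⁰)⁻¹(F'(y) - F'(y⁰))‖ ≤ ω₀ ‖y - y⁰‖ for all y in a convex open set D containing the ball of radius r = (1 - √(1 - 2h₀))/ω₀ around y⁰, where h₀ = ω₀‖d^{(1)}‖ < 1/2, the simplified Newton steps satisfy: there exists 0 < c < 1 with ‖d^{(k+1)}‖ ≤ c ‖d^{(k)}‖, and consequently ‖F(y^{(k)})‖ ≤ ‖F'(y⁰)‖ · c^k · ‖d^{(1)}‖ for all k. -/

import Mathlib

open Metric


lemma newton_key {Y Z : Type*} [NormedAddCommGroup Y] [NormedSpace ℝ Y] [CompleteSpace Y]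
    [NormedAddCommGroup Z] [NormedSpace ℝ Z]
    (F : Y → Z) (D : Set Y) (hDopen : IsOpen D) (hDconv : Convex ℝ D)
    (y0 : Y) (f' : Y → Y →L[ℝ] Z)
    (hdiff : ∀ y ∈ D, HasFDerivAt F (f' y) y)
    (hcont : ContinuousOn f' D)
    (A : Y ≃L[ℝ] Z) (hA : (A : Y →L[ℝ] Z) = f' y0)
    (ω₀ : ℝ) (hω₀ : 0 < ω₀)
    (hLip : ∀ z ∈ D, ‖(A.symm : Z →L[ℝ] Y).comp (f' z - f' y0)‖ ≤ ω₀ * ‖z - y0‖)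
    (z : Y) (hz : z ∈ D) (v : Y) (hzv : z + v ∈ D) :
    ‖A.symm (F (z + v)) - A.symm (F z) - v‖ ≤ ω₀ * (‖z - y0‖ + ‖v‖ / 2) * ‖v‖ := by
  have hseg : ∀ t ∈ Set.Icc (0:ℝ) 1, z + t • v ∈ D := by
    intro t ht
    have h := hDconv.add_smul_sub_mem hz hzv ht
    simpa using h
  set h : ℝ → Y := fun t => A.symm ((f' (z + t • v)) v) - v with hh
  have hpath : ∀ t : ℝ, HasDerivAt (fun t : ℝ => z + t • v) v t := by
    intro t
    have := ((hasDerivAt_id t).smul_const v).const_add z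
    simpa using this
  have hg : ∀ t ∈ Set.Icc (0:ℝ) 1,
      HasDerivAt (fun t : ℝ => A.symm (F (z + t • v)) - t • v) (h t) t := by
    intro t ht
    have h1 : HasDerivAt (fun t : ℝ => F (z + t • v)) ((f' (z + t • v)) v) t :=
      (hdiff _ (hseg t ht)).comp_hasDerivAt t (hpath t)
    have h2 : HasDerivAt (fun t : ℝ => A.symm (F (z + t • v)))
        (A.symm ((f' (z + t • v)) v)) t :=
      (A.symm : Z →L[ℝ] Y).hasFDerivAt.comp_hasDerivAt t h1
    have h3 : HasDerivAt (fun t : ℝ => t • v) v t := by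
      simpa using (hasDerivAt_id t).smul_const v
    have h4 : HasDerivAt (fun t : ℝ => A.symm (F (z + t • v)) - t • v)
        (A.symm ((f' (z + t • v)) v) - v) t := h2.sub h3
    exact h4
  have hcontpath : ContinuousOn (fun t : ℝ => z + t • v) (Set.Icc 0 1) :=
    Continuous.continuousOn (by continuity)
  have hmaps : Set.MapsTo (fun t : ℝ => z + t • v) (Set.Icc 0 1) D := fun t ht => hseg t ht
  have hconth : ContinuousOn h (Set.Icc (0:ℝ) 1) := by
    have : ContinuousOn (fun t : ℝ => (f' (z + t • v)) v) (Set.Icc 0 1) :=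
      (hcont.comp hcontpath hmaps).clm_apply continuousOn_const
    exact (((A.symm : Z →L[ℝ] Y).continuous.comp_continuousOn this).sub continuousOn_const)
  have hint : IntervalIntegrable h MeasureTheory.volume 0 1 :=
    hconth.intervalIntegrable_of_Icc zero_le_one
  have hFTC : (∫ t in (0:ℝ)..1, h t) = A.symm (F (z + v)) - A.symm (F z) - v := by
    have := intervalIntegral.integral_eq_sub_of_hasDerivAt
      (f := fun t : ℝ => A.symm (F (z + t • v)) - t • v)
      (f' := h) (a := 0) (b := 1)
      (fun t ht => hg t (by simpa [Set.uIcc_of_le (zero_le_one : (0:ℝ) ≤ 1)] using ht)) hint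
    rw [this]
    simp only [one_smul, zero_smul, sub_zero]
    abel
  have hbound : ∀ t ∈ Set.Ioc (0:ℝ) 1, ‖h t‖ ≤ ω₀ * (‖z - y0‖ + t * ‖v‖) * ‖v‖ := by
    intro t ht
    have htmem : t ∈ Set.Icc (0:ℝ) 1 := ⟨le_of_lt ht.1, ht.2⟩
    have hmem := hseg t htmem
    have h1 : h t = ((A.symm : Z →L[ℝ] Y).comp (f' (z + t • v) - f' y0)) v := by
      simp only [hh, ContinuousLinearMap.comp_apply, ContinuousLinearMap.sub_apply, map_sub]
      rw [← hA]
      simp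
    rw [h1]
    calc ‖((A.symm : Z →L[ℝ] Y).comp (f' (z + t • v) - f' y0)) v‖
        ≤ ‖(A.symm : Z →L[ℝ] Y).comp (f' (z + t • v) - f' y0)‖ * ‖v‖ :=
          ContinuousLinearMap.le_opNorm _ _
      _ ≤ (ω₀ * ‖z + t • v - y0‖) * ‖v‖ := by
          exact mul_le_mul_of_nonneg_right (hLip _ hmem) (norm_nonneg v)
      _ ≤ ω₀ * (‖z - y0‖ + t * ‖v‖) * ‖v‖ := by
          apply mul_le_mul_of_nonneg_right _ (norm_nonneg v)
          apply mul_le_mul_of_nonneg_left _ (le_of_lt hω₀)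
          calc ‖z + t • v - y0‖ = ‖(z - y0) + t • v‖ := by rw [show z + t • v - y0 = (z - y0) + t • v by abel]
            _ ≤ ‖z - y0‖ + ‖t • v‖ := norm_add_le _ _
            _ = ‖z - y0‖ + t * ‖v‖ := by
                rw [norm_smul, Real.norm_eq_abs, abs_of_pos ht.1]
  have hintb : (∫ t in (0:ℝ)..1, ω₀ * (‖z - y0‖ + t * ‖v‖) * ‖v‖) =
      ω₀ * (‖z - y0‖ + ‖v‖ / 2) * ‖v‖ := by
    have heq : (fun t : ℝ => ω₀ * (‖z - y0‖ + t * ‖v‖) * ‖v‖) =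
        fun t : ℝ => (ω₀ * ‖z - y0‖ * ‖v‖) + (ω₀ * ‖v‖ * ‖v‖) * t := by
      funext t; ring
    rw [heq]
    rw [intervalIntegral.integral_add (intervalIntegrable_const)
      ((intervalIntegral.intervalIntegrable_id).const_mul _),
      intervalIntegral.integral_const, intervalIntegral.integral_const_mul, integral_id]
    simp
    ring
  calc ‖A.symm (F (z + v)) - A.symm (F z) - v‖ = ‖∫ t in (0:ℝ)..1, h t‖ := by rw [hFTC]
    _ ≤ |∫ t in (0:ℝ)..1, ω₀ * (‖z - y0‖ + t * ‖v‖) * ‖v‖| := by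
        apply intervalIntegral.norm_integral_le_abs_of_norm_le _
          (Continuous.intervalIntegrable
            ((continuous_const.mul (continuous_const.add
              (continuous_id.mul continuous_const))).mul continuous_const) 0 1)
        have hI : Set.uIoc (0:ℝ) 1 = Set.Ioc 0 1 := Set.uIoc_of_le zero_le_one
        rw [hI]
        filter_upwards [MeasureTheory.ae_restrict_mem measurableSet_Ioc] with t ht
        exact hbound t ht
    _ = ω₀ * (‖z - y0‖ + ‖v‖ / 2) * ‖v‖ := by
        rw [hintb, abs_of_nonneg]
        positivity

set_option maxHeartbeats 1000000 in
/-- Contraction of the simplified Newton steps and residual decay under an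
affine covariant Lipschitz condition. -/
theorem stmt_1
    {Y Z : Type*} [NormedAddCommGroup Y] [NormedSpace ℝ Y] [CompleteSpace Y]
    [NormedAddCommGroup Z] [NormedSpace ℝ Z] [CompleteSpace Z]
    (F : Y → Z) (D : Set Y) (hDopen : IsOpen D) (hDconv : Convex ℝ D)
    (y0 : Y) (hy0D : y0 ∈ D)
    (f' : Y → Y →L[ℝ] Z)
    (hdiff : ∀ y ∈ D, HasFDerivAt F (f' y) y)
    (hcont : ContinuousOn f' D)
    (A : Y ≃L[ℝ] Z) (hA : (A : Y →L[ℝ] Z) = f' y0)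
    (y d : ℕ → Y)
    (hy0 : y 0 = y0)
    (hd : ∀ k : ℕ, d (k + 1) = -A.symm (F (y k)))
    (hy : ∀ k : ℕ, y (k + 1) = y k + d (k + 1))
    (ω₀ : ℝ) (hω₀ : 0 < ω₀)
    (hLip : ∀ z ∈ D,
      ‖(A.symm : Z →L[ℝ] Y).comp (f' z - f' y0)‖ ≤ ω₀ * ‖z - y0‖)
    (h0 : ω₀ * ‖d 1‖ < 1 / 2)
    (hball :
      closedBall y0 ((1 - Real.sqrt (1 - 2 * (ω₀ * ‖d 1‖))) / ω₀) ⊆ D) :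
    ∃ c : ℝ, 0 < c ∧ c < 1 ∧
      (∀ k : ℕ, 1 ≤ k → ‖d (k + 1)‖ ≤ c * ‖d k‖) ∧
      ∀ k : ℕ, ‖F (y k)‖ ≤ ‖(A : Y →L[ℝ] Z)‖ * c ^ k * ‖d 1‖ := by
  set h₀ : ℝ := ω₀ * ‖d 1‖ with hh₀
  set s : ℝ := Real.sqrt (1 - 2 * h₀) with hsdef
  set r : ℝ := (1 - s) / ω₀ with hrdef
  have hh0 : 0 ≤ h₀ := mul_nonneg hω₀.le (norm_nonneg _)
  have hpos : 0 < 1 - 2 * h₀ := by linarith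
  have hs : 0 < s := Real.sqrt_pos.2 hpos
  have hs2 : s ^ 2 = 1 - 2 * h₀ := Real.sq_sqrt hpos.le
  have hs1 : s ≤ 1 := by nlinarith [hs2, hs]
  have hr0 : 0 ≤ r := div_nonneg (by linarith) hω₀.le
  have hωr : ω₀ * r = 1 - s := by
    rw [hrdef]; field_simp
  have hfix : ‖d 1‖ + ω₀ / 2 * r ^ 2 = r := by
    have hd1 : ‖d 1‖ = h₀ / ω₀ := by rw [hh₀]; field_simp
    rw [hd1, hrdef]
    field_simp
    linear_combination hs2
  -- partial sums of step norms
  set S : ℕ → ℝ := fun k => ∑ i ∈ Finset.range k, ‖d (i + 1)‖ with hSdef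
  have hS0 : S 0 = 0 := by simp [hSdef]
  have hS1 : S 1 = ‖d 1‖ := by simp [hSdef]
  have hSsucc : ∀ k, S (k + 1) = S k + ‖d (k + 1)‖ := by
    intro k; simp [hSdef, Finset.sum_range_succ]
  have hSnonneg : ∀ k, 0 ≤ S k := by
    intro k; exact Finset.sum_nonneg fun i _ => norm_nonneg _
  have hyS : ∀ k, ‖y k - y0‖ ≤ S k := by
    intro k
    induction k with
    | zero => simp [hy0, hS0]
    | succ k ih =>
      rw [hy k, hSsucc k]
      calc ‖y k + d (k + 1) - y0‖ = ‖(y k - y0) + d (k + 1)‖ := by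
            rw [show y k + d (k + 1) - y0 = (y k - y0) + d (k + 1) by abel]
        _ ≤ ‖y k - y0‖ + ‖d (k + 1)‖ := norm_add_le _ _
        _ ≤ S k + ‖d (k + 1)‖ := by linarith
  have hyD : ∀ k, S k ≤ r → y k ∈ D := by
    intro k hk
    apply hball
    rw [mem_closedBall, dist_eq_norm]
    exact le_trans (hyS k) hk
  -- the key one-step estimate
  have hstep : ∀ k, S k ≤ r → S (k + 1) ≤ r →
      ‖d (k + 2)‖ ≤ ω₀ * (S k + ‖d (k + 1)‖ / 2) * ‖d (k + 1)‖ := by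
    intro k hk hk1
    have hzD : y k ∈ D := hyD k hk
    have hzvD : y k + d (k + 1) ∈ D := by rw [← hy k]; exact hyD (k + 1) hk1
    have hkey := newton_key F D hDopen hDconv y0 f' hdiff hcont A hA ω₀ hω₀ hLip
      (y k) hzD (d (k + 1)) hzvD
    have e1 : A.symm (F (y k + d (k + 1))) = -d (k + 2) := by
      rw [← hy k]
      have := hd (k + 1)
      rw [this]; simp
    have e2 : A.symm (F (y k)) = -d (k + 1) := by
      have := hd k
      rw [this]; simp
    rw [e1, e2] at hkey
    have e3 : -d (k + 2) - -d (k + 1) - d (k + 1) = -d (k + 2) := by abel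
    rw [e3, norm_neg] at hkey
    calc ‖d (k + 2)‖ ≤ ω₀ * (‖y k - y0‖ + ‖d (k + 1)‖ / 2) * ‖d (k + 1)‖ := hkey
      _ ≤ ω₀ * (S k + ‖d (k + 1)‖ / 2) * ‖d (k + 1)‖ := by
          apply mul_le_mul_of_nonneg_right _ (norm_nonneg _)
          apply mul_le_mul_of_nonneg_left _ hω₀.le
          linarith [hyS k]
  -- main induction: iterates stay in the ball
  have hmain : ∀ k, S (k + 1) ≤ ‖d 1‖ + ω₀ / 2 * (S k) ^ 2 ∧ S k ≤ r := by
    intro k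
    induction k with
    | zero =>
      constructor
      · rw [hS1, hS0]; norm_num
      · rw [hS0]; exact hr0
    | succ k ih =>
      have hSk1r : S (k + 1) ≤ r := by
        calc S (k + 1) ≤ ‖d 1‖ + ω₀ / 2 * (S k) ^ 2 := ih.1
          _ ≤ ‖d 1‖ + ω₀ / 2 * r ^ 2 := by
              have h2 : S k ^ 2 ≤ r ^ 2 := pow_le_pow_left₀ (hSnonneg k) ih.2 2
              nlinarith
          _ = r := hfix
      refine ⟨?_, hSk1r⟩
      have hst := hstep k ih.2 hSk1r
      have hexp : ω₀ * (S k + ‖d (k + 1)‖ / 2) * ‖d (k + 1)‖ =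
          ω₀ / 2 * ((S (k + 1)) ^ 2 - (S k) ^ 2) := by
        rw [hSsucc k]; ring
      rw [hexp] at hst
      have := ih.1
      rw [hSsucc (k + 1)]
      linarith
  have hSr : ∀ k, S k ≤ r := fun k => (hmain k).2
  -- the contraction constant
  refine ⟨max (ω₀ * r) (1 / 2), lt_max_of_lt_right one_half_pos, ?_, ?_, ?_⟩
  · apply max_lt _ (by norm_num)
    rw [hωr]; linarith
  · -- contraction
    intro k hk
    obtain ⟨j, rfl⟩ := Nat.exists_eq_add_of_le hk
    have hst := hstep j (hSr j) (hSr (j + 1))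
    calc ‖d (1 + j + 1)‖ = ‖d (j + 2)‖ := by rw [show 1 + j + 1 = j + 2 from by omega]
      _ ≤ ω₀ * (S j + ‖d (j + 1)‖ / 2) * ‖d (j + 1)‖ := hst
      _ ≤ ω₀ * r * ‖d (j + 1)‖ := by
          apply mul_le_mul_of_nonneg_right _ (norm_nonneg _)
          apply mul_le_mul_of_nonneg_left _ hω₀.le
          have := hSr (j + 1)
          rw [hSsucc j] at this
          linarith [norm_nonneg (d (j + 1))]
      _ ≤ max (ω₀ * r) (1 / 2) * ‖d (j + 1)‖ :=
          mul_le_mul_of_nonneg_right (le_max_left _ _) (norm_nonneg _)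
      _ = max (ω₀ * r) (1 / 2) * ‖d (1 + j)‖ := by rw [show 1 + j = j + 1 from by omega]
  · -- residual decay
    intro k
    set c : ℝ := max (ω₀ * r) (1 / 2) with hcdef
    have hc0 : 0 ≤ c := le_trans (by norm_num) (le_max_right _ _)
    have hdk : ∀ k, ‖d (k + 1)‖ ≤ c ^ k * ‖d 1‖ := by
      intro k
      induction k with
      | zero => simp
      | succ k ih =>
        have hst := hstep k (hSr k) (hSr (k + 1))
        have hcontr : ‖d (k + 2)‖ ≤ c * ‖d (k + 1)‖ := by
          calc ‖d (k + 2)‖ ≤ ω₀ * (S k + ‖d (k + 1)‖ / 2) * ‖d (k + 1)‖ := hst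
            _ ≤ ω₀ * r * ‖d (k + 1)‖ := by
                apply mul_le_mul_of_nonneg_right _ (norm_nonneg _)
                apply mul_le_mul_of_nonneg_left _ hω₀.le
                have := hSr (k + 1)
                rw [hSsucc k] at this
                linarith [norm_nonneg (d (k + 1))]
            _ ≤ c * ‖d (k + 1)‖ :=
                mul_le_mul_of_nonneg_right (le_max_left _ _) (norm_nonneg _)
        calc ‖d (k + 1 + 1)‖ ≤ c * ‖d (k + 1)‖ := hcontr
          _ ≤ c * (c ^ k * ‖d 1‖) := mul_le_mul_of_nonneg_left ih hc0
          _ = c ^ (k + 1) * ‖d 1‖ := by ring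
    have hFd : F (y k) = -(A (d (k + 1))) := by
      have := congrArg A (hd k)
      simp at this
      rw [this, neg_neg]
    calc ‖F (y k)‖ = ‖(A : Y →L[ℝ] Z) (d (k + 1))‖ := by
          rw [hFd, norm_neg]; rfl
      _ ≤ ‖(A : Y →L[ℝ] Z)‖ * ‖d (k + 1)‖ := ContinuousLinearMap.le_opNorm _ _
      _ ≤ ‖(A : Y →L[ℝ] Z)‖ * (c ^ k * ‖d 1‖) :=
          mul_le_mul_of_nonneg_left (hdk k) (norm_nonneg _)
      _ = ‖(A : Y →L[ℝ] Z)‖ * c ^ k * ‖d 1‖ := by ring
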